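/- Let n ≥ 1 be a natural number, β ∈ ℝ, γ > 0, and s : {1,…,n} → ℝ. Then Σ_{i=1}^n (β·s_i + γ·s_i²) − ln( Σ_{i=1}^n exp(s_i) ) ≥ −(n−1)·β²/(4γ) − (β−1)²/(4γ) − ln n. -/
import Mathlib

lemma quad_bound (γ : ℝ) (hγ : 0 < γ) (a t : ℝ) :
    a * t + γ * t ^ 2 ≥ -(a ^ 2) / (4 * γ) := by
  rw [ge_iff_le, div_le_iff₀ (by linarith)]
  nlinarith [sq_nonneg (2 * γ * t + a)]

/-- The (corrected) lower bound for the second term in the RHS of inequality (21)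
in the proof of Theorem 1 of the paper. -/
theorem stmt_4 (n : ℕ) (hn : 1 ≤ n) (β γ : ℝ) (hγ : 0 < γ) (s : Fin n → ℝ) :
    (∑ i : Fin n, (β * s i + γ * (s i) ^ 2)) -
        Real.log (∑ i : Fin n, Real.exp (s i)) ≥
      -((n : ℝ) - 1) * β ^ 2 / (4 * γ) - (β - 1) ^ 2 / (4 * γ) - Real.log n := by
  haveI : Nonempty (Fin n) := Fin.pos_iff_nonempty.mp hn
  obtain ⟨k, hk⟩ := Finset.exists_max_image Finset.univ s ⟨⟨0, hn⟩, Finset.mem_univ _⟩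
  -- log-sum-exp bound
  have hlog : Real.log (∑ i : Fin n, Real.exp (s i)) ≤ s k + Real.log n := by
    have hsum : (∑ i : Fin n, Real.exp (s i)) ≤ (n : ℝ) * Real.exp (s k) := by
      calc (∑ i : Fin n, Real.exp (s i)) ≤ ∑ _i : Fin n, Real.exp (s k) :=
            Finset.sum_le_sum fun i _ => Real.exp_le_exp.mpr (hk.2 i (Finset.mem_univ i))
        _ = (n : ℝ) * Real.exp (s k) := by simp [mul_comm]
    have hpos : (0 : ℝ) < ∑ i : Fin n, Real.exp (s i) :=
      Finset.sum_pos (fun i _ => Real.exp_pos _) Finset.univ_nonempty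
    calc Real.log (∑ i : Fin n, Real.exp (s i)) ≤ Real.log ((n : ℝ) * Real.exp (s k)) :=
          Real.log_le_log hpos hsum
      _ = Real.log n + s k := by
          rw [Real.log_mul (by positivity) (Real.exp_ne_zero _), Real.log_exp]
      _ = s k + Real.log n := by ring
  -- quadratic bounds
  have hquad : (∑ i : Fin n, (β * s i + γ * (s i) ^ 2)) - s k ≥
      -((n : ℝ) - 1) * β ^ 2 / (4 * γ) - (β - 1) ^ 2 / (4 * γ) := by
    have hsplit : (∑ i : Fin n, (β * s i + γ * (s i) ^ 2)) - s k =
        (∑ i ∈ Finset.univ.erase k, (β * s i + γ * (s i) ^ 2)) +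
          ((β - 1) * s k + γ * (s k) ^ 2) := by
      rw [← Finset.add_sum_erase _ _ (Finset.mem_univ k)]; ring
    rw [hsplit]
    have h1 : (∑ i ∈ Finset.univ.erase k, (β * s i + γ * (s i) ^ 2)) ≥
        -((n : ℝ) - 1) * β ^ 2 / (4 * γ) := by
      calc (∑ i ∈ Finset.univ.erase k, (β * s i + γ * (s i) ^ 2)) ≥
            ∑ _i ∈ Finset.univ.erase k, (-(β ^ 2) / (4 * γ)) :=
            Finset.sum_le_sum fun i _ => quad_bound γ hγ β (s i)
        _ = ((n : ℝ) - 1) * (-(β ^ 2) / (4 * γ)) := by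
            rw [Finset.sum_const, Finset.card_erase_of_mem (Finset.mem_univ k)]
            simp [Nat.cast_sub hn]
        _ = -((n : ℝ) - 1) * β ^ 2 / (4 * γ) := by ring
    have h2 := quad_bound γ hγ (β - 1) (s k)
    calc (∑ i ∈ Finset.univ.erase k, (β * s i + γ * (s i) ^ 2)) +
          ((β - 1) * s k + γ * (s k) ^ 2)
        ≥ -((n : ℝ) - 1) * β ^ 2 / (4 * γ) + (-((β - 1) ^ 2) / (4 * γ)) := by
          exact add_le_add h1 h2
      _ = -((n : ℝ) - 1) * β ^ 2 / (4 * γ) - (β - 1) ^ 2 / (4 * γ) := by ring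
  linarith
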